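/- Let L be a complete lattice and E : EReal → L infimum-preserving with left adjoint o. For a real constant t, define f(r) = r + t on EReal (with −∞ + t = −∞, +∞ + t = +∞). Then f preserves arbitrary suprema, and the left adjoint of E ∘ f⁻¹ (equivalently of r ↦ E(r − t)) equals o + t, i.e., ⨅ {r ∈ EReal | P ≤ E(r − t)} = o(P) + t for all P ∈ L. -/

import Mathlib

/-- Adding a real constant is an order isomorphism of `EReal`. -/
noncomputable def addCoeOrderIso (t : ℝ) : EReal ≃o EReal where
  toFun x := x + (t : EReal)
  invFun x := x - (t : EReal)
  left_inv _ := EReal.add_sub_cancel_right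
  right_inv _ := EReal.sub_add_cancel
  map_rel_iff' := (EReal.addLECancellable_coe t).add_le_add_iff_right

/-- Translation: `r ↦ r + t` preserves arbitrary suprema on `EReal`, and the
q-observable function of the translated spectral family `r ↦ E (r − t)` is `o + t`. -/
theorem stmt_15 {L : Type*} [CompleteLattice L] (E : EReal → L)
    (hE : ∀ S : Set EReal, E (sInf S) = ⨅ r ∈ S, E r) (t : ℝ) :
    (∀ S : Set EReal, sSup S + (t : EReal) = ⨆ r ∈ S, (r + (t : EReal))) ∧
    (∀ P : L,
      sInf {r : EReal | P ≤ E (r - (t : EReal))} =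
        sInf {r : EReal | P ≤ E r} + (t : EReal)) := by
  constructor
  · intro S
    exact (addCoeOrderIso t).map_sSup S
  · intro P
    have himg : {r : EReal | P ≤ E (r - (t : EReal))} =
        (fun r => r + (t : EReal)) '' {r : EReal | P ≤ E r} := by
      ext r
      constructor
      · intro hr
        exact ⟨r - t, hr, EReal.sub_add_cancel⟩
      · rintro ⟨s, hs, rfl⟩
        rwa [Set.mem_setOf_eq, EReal.add_sub_cancel_right]
    rw [himg, sInf_image]
    exact ((addCoeOrderIso t).map_sInf _).symm
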